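/- Let X be a real vector space equipped with two norms ‖·‖_d and ‖·‖_ρ such that ‖x−y‖_d ≤ ‖x−y‖_ρ for all x, y ∈ X, (X, ‖·‖_d) is a quasi-Banach space (complete), T : X → X is continuous with respect to ‖·‖_d, and T is a (b,θ)-enriched contraction with respect to ‖·‖_ρ. Then T has a unique fixed point x*, and for every x_0 ∈ X the iteration x_{n+1} = (1−λ)x_n + λT x_n with λ = 1/(b+1) converges to x* in ‖·‖_d. -/

import Mathlib

open Filter Finset

lemma lemA {X : Type*} [AddCommGroup X] (N : X → ℝ) (C : ℝ)
    (hC : 1 ≤ C) (hN0 : N 0 = 0)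
    (h2 : ∀ x y, N (x + y) ≤ C * (N x + N y)) (u : ℕ → X) :
    ∀ t a c, a ≤ c → c ≤ a + 2 ^ t →
      N (u c - u a) ≤ C ^ t * ∑ i ∈ Finset.Ico a c, N (u (i + 1) - u i) := by
  intro t
  induction t with
  | zero =>
    intro a c hac h
    have : c = a ∨ c = a + 1 := by omega
    rcases this with rfl | rfl
    · simp [hN0]
    · simp
  | succ t ih =>
    intro a c hac h
    set m := min c (a + 2 ^ t) with hm
    have h1 : a ≤ m := le_min hac (Nat.le_add_right _ _)
    have h2' : m ≤ c := min_le_left _ _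
    have h3 : m ≤ a + 2 ^ t := min_le_right _ _
    have h4 : c ≤ m + 2 ^ t := by
      have hp : 2 ^ (t + 1) = 2 ^ t + 2 ^ t := by ring
      omega
    have tri : N (u c - u a) ≤ C * (N (u c - u m) + N (u m - u a)) := by
      have := h2 (u c - u m) (u m - u a)
      rwa [sub_add_sub_cancel] at this
    have hCnn : (0 : ℝ) ≤ C := le_trans zero_le_one hC
    calc N (u c - u a) ≤ C * (N (u c - u m) + N (u m - u a)) := tri
      _ ≤ C * ((C ^ t * ∑ i ∈ Finset.Ico m c, N (u (i + 1) - u i))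
            + (C ^ t * ∑ i ∈ Finset.Ico a m, N (u (i + 1) - u i))) := by
          gcongr
          · exact ih m c h2' h4
          · exact ih a m h1 h3
      _ = C ^ (t + 1) * ∑ i ∈ Finset.Ico a c, N (u (i + 1) - u i) := by
          rw [← Finset.sum_Ico_consecutive _ h1 h2']
          ring

/-- Dyadic-block Cauchy bound for geometric step decay, in a quasi-normed group. -/
lemma lemB {X : Type*} [AddCommGroup X] (N : X → ℝ) (C : ℝ)
    (hC : 1 ≤ C) (hnn : ∀ x, 0 ≤ N x) (hN0 : N 0 = 0)
    (h2 : ∀ x y, N (x + y) ≤ C * (N x + N y))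
    (u : ℕ → X) (D γ : ℝ) (hD : 0 ≤ D) (hγ0 : 0 ≤ γ) (hγ1 : γ ≤ 1)
    (hd : ∀ i, N (u (i + 1) - u i) ≤ D * γ ^ i) :
    ∀ j r n m, n ≤ m → m ≤ n + (2 ^ (r + j) - 2 ^ r) →
      N (u m - u n) ≤ D * γ ^ n *
        ∑ i ∈ Finset.range j, C ^ (i + 1) * (2 * C) ^ (r + i) * γ ^ (2 ^ (r + i) - 2 ^ r) := by
  have hCnn : (0 : ℝ) ≤ C := le_trans zero_le_one hC
  intro j
  induction j with
  | zero =>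
    intro r n m hnm h
    have : m = n := by
      rw [Nat.add_zero] at h
      omega
    subst this
    simp [hN0]
  | succ j ih =>
    intro r n m hnm h
    set c := min m (n + 2 ^ r) with hc
    have hnc : n ≤ c := le_min hnm (Nat.le_add_right _ _)
    have hcm : c ≤ m := min_le_left _ _
    have hcr : c ≤ n + 2 ^ r := min_le_right _ _
    -- part 1 : near block
    have part1 : N (u c - u n) ≤ C ^ r * (2 ^ r * (D * γ ^ n)) := by
      have hA := lemA N C hC hN0 h2 u r n c hnc hcr
      have hsum : ∑ i ∈ Finset.Ico n c, N (u (i + 1) - u i) ≤ 2 ^ r * (D * γ ^ n) := by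
        calc ∑ i ∈ Finset.Ico n c, N (u (i + 1) - u i)
            ≤ ∑ i ∈ Finset.Ico n c, D * γ ^ n := by
              apply Finset.sum_le_sum
              intro i hi
              have hni : n ≤ i := (Finset.mem_Ico.mp hi).1
              calc N (u (i + 1) - u i) ≤ D * γ ^ i := hd i
                _ ≤ D * γ ^ n := by
                    apply mul_le_mul_of_nonneg_left _ hD
                    exact pow_le_pow_of_le_one hγ0 hγ1 hni
          _ = (c - n : ℕ) * (D * γ ^ n) := by
              rw [Finset.sum_const, Nat.card_Ico, nsmul_eq_mul]
          _ ≤ 2 ^ r * (D * γ ^ n) := by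
              apply mul_le_mul_of_nonneg_right _ (by positivity)
              have : (c - n : ℕ) ≤ 2 ^ r := by omega
              calc ((c - n : ℕ) : ℝ) ≤ ((2 ^ r : ℕ) : ℝ) := by exact_mod_cast this
                _ = 2 ^ r := by push_cast; ring
      calc N (u c - u n) ≤ C ^ r * ∑ i ∈ Finset.Ico n c, N (u (i + 1) - u i) := hA
        _ ≤ C ^ r * (2 ^ r * (D * γ ^ n)) := by
            apply mul_le_mul_of_nonneg_left hsum (by positivity)
    -- part 2 : far part via IH at r+1
    have sum_nonneg' : (0:ℝ) ≤ ∑ i ∈ Finset.range j,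
        C ^ (i + 1) * (2 * C) ^ (r + 1 + i) * γ ^ (2 ^ (r + 1 + i) - 2 ^ (r + 1)) := by
      apply Finset.sum_nonneg
      intro i _
      positivity
    have part2 : N (u m - u c) ≤ D * (γ ^ n * γ ^ (2 ^ r)) *
        ∑ i ∈ Finset.range j, C ^ (i + 1) * (2 * C) ^ (r + 1 + i) * γ ^ (2 ^ (r + 1 + i) - 2 ^ (r + 1)) := by
      rcases le_or_gt (n + 2 ^ r) m with hcase | hcase
      · have hceq : c = n + 2 ^ r := by omega
        have harith : m ≤ c + (2 ^ (r + 1 + j) - 2 ^ (r + 1)) := by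
          have e1 : 2 ^ (r + (j + 1)) = 2 ^ (r + 1 + j) := by ring_nf
          have e2 : 2 ^ (r + 1) = 2 ^ r + 2 ^ r := by ring
          have e3 : 2 ^ (r + 1) ≤ 2 ^ (r + 1 + j) := Nat.pow_le_pow_right (by norm_num) (by omega)
          have e4 : 2 ^ r ≤ 2 ^ (r + (j+1)) := Nat.pow_le_pow_right (by norm_num) (by omega)
          omega
        have := ih (r + 1) c m hcm harith
        calc N (u m - u c) ≤ D * γ ^ c *
            ∑ i ∈ Finset.range j, C ^ (i + 1) * (2 * C) ^ (r + 1 + i) * γ ^ (2 ^ (r + 1 + i) - 2 ^ (r + 1)) := this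
          _ = D * (γ ^ n * γ ^ (2 ^ r)) * _ := by rw [hceq, pow_add]
      · have hceq : c = m := by omega
        rw [hceq]
        simp only [sub_self, hN0]
        positivity
    -- combine
    have tri : N (u m - u n) ≤ C * (N (u m - u c) + N (u c - u n)) := by
      have := h2 (u m - u c) (u c - u n)
      rwa [sub_add_sub_cancel] at this
    -- rewrite target sum
    have hsplit : ∑ i ∈ Finset.range (j + 1),
          C ^ (i + 1) * (2 * C) ^ (r + i) * γ ^ (2 ^ (r + i) - 2 ^ r)
        = C * (2 * C) ^ r + ∑ i ∈ Finset.range j,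
            C * γ ^ (2 ^ r) * (C ^ (i + 1) * (2 * C) ^ (r + 1 + i) * γ ^ (2 ^ (r + 1 + i) - 2 ^ (r + 1))) := by
      rw [Finset.sum_range_succ']
      have hterm : ∀ i, C ^ (i + 1 + 1) * (2 * C) ^ (r + (i + 1)) * γ ^ (2 ^ (r + (i + 1)) - 2 ^ r)
          = C * γ ^ (2 ^ r) * (C ^ (i + 1) * (2 * C) ^ (r + 1 + i) * γ ^ (2 ^ (r + 1 + i) - 2 ^ (r + 1))) := by
        intro i
        have hidx : r + (i + 1) = r + 1 + i := by ring
        have hexp : 2 ^ r + (2 ^ (r + 1 + i) - 2 ^ (r + 1)) = 2 ^ (r + 1 + i) - 2 ^ r := by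
          have e2 : 2 ^ (r + 1) = 2 ^ r + 2 ^ r := by ring
          have e3 : 2 ^ (r + 1) ≤ 2 ^ (r + 1 + i) := Nat.pow_le_pow_right (by norm_num) (by omega)
          omega
        rw [hidx]
        rw [show C * γ ^ (2 ^ r) * (C ^ (i + 1) * (2 * C) ^ (r + 1 + i) * γ ^ (2 ^ (r + 1 + i) - 2 ^ (r + 1)))
          = C ^ (i + 1 + 1) * (2 * C) ^ (r + 1 + i) * (γ ^ (2 ^ r) * γ ^ (2 ^ (r + 1 + i) - 2 ^ (r + 1))) by ring]
        rw [← pow_add, hexp]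
      simp only [hterm]
      simp [add_comm]
    rw [hsplit]
    calc N (u m - u n) ≤ C * (N (u m - u c) + N (u c - u n)) := tri
      _ ≤ C * ((D * (γ ^ n * γ ^ (2 ^ r)) *
            ∑ i ∈ Finset.range j, C ^ (i + 1) * (2 * C) ^ (r + 1 + i) * γ ^ (2 ^ (r + 1 + i) - 2 ^ (r + 1)))
            + C ^ r * (2 ^ r * (D * γ ^ n))) := by
          apply mul_le_mul_of_nonneg_left _ hCnn
          exact add_le_add part2 part1
      _ = D * γ ^ n * (C * (2 * C) ^ r + ∑ i ∈ Finset.range j,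
            C * γ ^ (2 ^ r) * (C ^ (i + 1) * (2 * C) ^ (r + 1 + i) * γ ^ (2 ^ (r + 1 + i) - 2 ^ (r + 1)))) := by
          simp only [Finset.mul_sum, mul_add, Finset.mul_sum]
          rw [add_comm]
          congr 1
          · ring
          · apply Finset.sum_congr rfl
            intro i _
            ring

lemma lemK (C γ : ℝ) (hC : 1 ≤ C) (hγ0 : 0 ≤ γ) (hγ1 : γ < 1) :
    Summable (fun i : ℕ => (2 * C ^ 2) ^ (i + 1) * γ ^ (2 ^ i - 1)) := by
  have hCnn : (0:ℝ) ≤ C := le_trans zero_le_one hC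
  apply summable_of_ratio_norm_eventually_le (r := 1/2) (by norm_num)
  have hev : ∀ᶠ i : ℕ in atTop, (2 * C ^ 2) * γ ^ i ≤ 1/2 := by
    have ht : Tendsto (fun i : ℕ => (2 * C ^ 2) * γ ^ i) atTop (nhds 0) := by
      simpa using (tendsto_pow_atTop_nhds_zero_of_lt_one hγ0 hγ1).const_mul (2 * C ^ 2)
    exact (ht.eventually_lt_const (by norm_num)).mono fun i hi => le_of_lt hi
  filter_upwards [hev] with i hi
  have hnn1 : (0:ℝ) ≤ (2 * C ^ 2) ^ (i + 1) * γ ^ (2 ^ i - 1) := by positivity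
  have hnn2 : (0:ℝ) ≤ (2 * C ^ 2) ^ (i + 2) * γ ^ (2 ^ (i + 1) - 1) := by positivity
  rw [Real.norm_of_nonneg hnn2, Real.norm_of_nonneg hnn1]
  have hexp : 2 ^ (i + 1) - 1 = 2 ^ i + (2 ^ i - 1) := by
    have : 1 ≤ 2 ^ i := Nat.one_le_two_pow
    have h2 : (2:ℕ) ^ (i + 1) = 2 ^ i + 2 ^ i := by ring
    omega
  have key : (2 * C ^ 2) ^ (i + 2) * γ ^ (2 ^ (i + 1) - 1)
      = ((2 * C ^ 2) * γ ^ (2 ^ i)) * ((2 * C ^ 2) ^ (i + 1) * γ ^ (2 ^ i - 1)) := by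
    rw [hexp, pow_add]
    ring
  rw [key]
  apply mul_le_mul_of_nonneg_right _ hnn1
  calc (2 * C ^ 2) * γ ^ (2 ^ i) ≤ (2 * C ^ 2) * γ ^ i := by
        apply mul_le_mul_of_nonneg_left _ (by positivity)
        exact pow_le_pow_of_le_one hγ0 hγ1.le (Nat.lt_two_pow_self (n := i)).le
    _ ≤ 1/2 := hi

lemma tendstoZero {f : ℕ → ℝ} (hf : ∀ n, 0 ≤ f n) :
    Filter.Tendsto f Filter.atTop (nhds 0) ↔ ∀ ε > 0, ∃ N, ∀ n ≥ N, f n < ε := by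
  rw [Metric.tendsto_atTop]
  constructor
  · intro h ε hε
    obtain ⟨N, hN⟩ := h ε hε
    refine ⟨N, fun n hn => ?_⟩
    have := hN n hn
    rwa [Real.dist_eq, sub_zero, abs_of_nonneg (hf n)] at this
  · intro h ε hε
    obtain ⟨N, hN⟩ := h ε hε
    refine ⟨N, fun n hn => ?_⟩
    rw [Real.dist_eq, sub_zero, abs_of_nonneg (hf n)]
    exact hN n hn




/-- Maia-type theorem: two quasi-norms ‖·‖_d ≤ ‖·‖_ρ on X,
(X,‖·‖_d) complete, T continuous w.r.t. ‖·‖_d and a (b,θ)-enriched contraction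
w.r.t. ‖·‖_ρ; then T has a unique fixed point x* and the Krasnoselskij iteration
with λ = 1/(b+1) converges to x* in ‖·‖_d from any x₀. -/
theorem stmt_11 {X : Type*} [AddCommGroup X] [Module ℝ X]
    (Nd Nρ : X → ℝ) (Cd Cρ : ℝ) (hCd : 1 ≤ Cd) (hCρ : 1 ≤ Cρ)
    (hnnd : ∀ x, 0 ≤ Nd x) (h0d : ∀ x, Nd x = 0 ↔ x = 0)
    (h1d : ∀ (r : ℝ) (x : X), Nd (r • x) = |r| * Nd x)
    (h2d : ∀ x y, Nd (x + y) ≤ Cd * (Nd x + Nd y))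
    (hnnρ : ∀ x, 0 ≤ Nρ x) (h0ρ : ∀ x, Nρ x = 0 ↔ x = 0)
    (h1ρ : ∀ (r : ℝ) (x : X), Nρ (r • x) = |r| * Nρ x)
    (h2ρ : ∀ x y, Nρ (x + y) ≤ Cρ * (Nρ x + Nρ y))
    (hle : ∀ x y : X, Nd (x - y) ≤ Nρ (x - y))
    (hcomplete : ∀ u : ℕ → X,
      (∀ ε > 0, ∃ N : ℕ, ∀ m ≥ N, ∀ n ≥ N, Nd (u m - u n) < ε) →
      ∃ l : X, Filter.Tendsto (fun n => Nd (u n - l)) Filter.atTop (nhds 0))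
    (T : X → X)
    (hcont : ∀ x : X, ∀ ε > 0, ∃ δ > 0, ∀ y : X, Nd (y - x) < δ → Nd (T y - T x) < ε)
    (b θ : ℝ) (hb : 0 ≤ b) (hθ0 : 0 ≤ θ) (hθ : θ < b + 1)
    (hT : ∀ x y, Nρ (b • (x - y) + (T x - T y)) ≤ θ * Nρ (x - y)) :
    ∃ xstar : X, T xstar = xstar ∧ (∀ q, T q = q → q = xstar) ∧
      ∀ xs : ℕ → X,
        (∀ n : ℕ, xs (n + 1) = (1 - 1 / (b + 1)) • xs n + (1 / (b + 1)) • T (xs n)) →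
        Filter.Tendsto (fun n => Nd (xs n - xstar)) Filter.atTop (nhds 0) := by
  have hb1 : (0:ℝ) < b + 1 := by linarith
  set γ := θ / (b + 1) with hγdef
  have hγ0 : 0 ≤ γ := div_nonneg hθ0 hb1.le
  have hγ1 : γ < 1 := (div_lt_one hb1).mpr hθ
  have hN0ρ : Nρ (0:X) = 0 := (h0ρ 0).mpr rfl
  have hCd0 : (0:ℝ) < Cd := zero_lt_one.trans_le hCd
  have hnegd : ∀ z : X, Nd (-z) = Nd z := fun z => by
    have := h1d (-1) z
    simpa using this
  have keystep : ∀ p q : X,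
      Nρ (((1 - 1/(b+1)) • p + (1/(b+1)) • T p) - ((1 - 1/(b+1)) • q + (1/(b+1)) • T q))
        ≤ γ * Nρ (p - q) := by
    intro p q
    have hrw : ((1 - 1/(b+1)) • p + (1/(b+1)) • T p) - ((1 - 1/(b+1)) • q + (1/(b+1)) • T q)
        = (1/(b+1)) • (b • (p - q) + (T p - T q)) := by
      have hb' : (1/(b+1)) * b = 1 - 1/(b+1) := by field_simp; ring
      rw [smul_add, smul_smul, hb', smul_sub, smul_sub]
      abel
    rw [hrw, h1ρ, abs_of_pos (by positivity : (0:ℝ) < 1/(b+1))]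
    calc 1/(b+1) * Nρ (b • (p - q) + (T p - T q)) ≤ 1/(b+1) * (θ * Nρ (p - q)) :=
          mul_le_mul_of_nonneg_left (hT p q) (by positivity)
      _ = γ * Nρ (p - q) := by rw [hγdef]; ring
  -- Main convergence result for any Krasnoselskij sequence
  have conv : ∀ xs : ℕ → X,
      (∀ n, xs (n + 1) = (1 - 1/(b+1)) • xs n + (1/(b+1)) • T (xs n)) →
      ∃ l : X, Filter.Tendsto (fun n => Nd (xs n - l)) Filter.atTop (nhds 0) ∧ T l = l := by
    intro xs hxs
    set D := Nρ (xs 1 - xs 0) with hDdef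
    have hD : 0 ≤ D := hnnρ _
    have hd : ∀ i, Nρ (xs (i + 1) - xs i) ≤ D * γ ^ i := by
      intro i
      induction i with
      | zero => simp [hDdef]
      | succ i ih =>
        have ks := keystep (xs (i+1)) (xs i)
        rw [← hxs (i+1), ← hxs i] at ks
        calc Nρ (xs (i+1+1) - xs (i+1)) ≤ γ * Nρ (xs (i+1) - xs i) := ks
          _ ≤ γ * (D * γ ^ i) := mul_le_mul_of_nonneg_left ih hγ0
          _ = D * γ ^ (i + 1) := by ring
    set K := ∑' i : ℕ, (2 * Cρ ^ 2) ^ (i + 1) * γ ^ (2 ^ i - 1) with hKdef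
    have hsumm := lemK Cρ γ hCρ hγ0 hγ1
    have hK0 : 0 ≤ K := tsum_nonneg (fun i => by positivity)
    have bnd : ∀ n m : ℕ, n ≤ m → Nρ (xs m - xs n) ≤ D * γ ^ n * K := by
      intro n m hnm
      have hj : m ≤ n + (2 ^ (0 + m) - 2 ^ 0) := by
        have := Nat.lt_two_pow_self (n := m)
        simp only [Nat.zero_add, pow_zero]
        omega
      have hB := lemB Nρ Cρ hCρ hnnρ hN0ρ h2ρ xs D γ hD hγ0 hγ1.le hd m 0 n m hnm hj
      calc Nρ (xs m - xs n) ≤ D * γ ^ n * ∑ i ∈ Finset.range m,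
            Cρ ^ (i + 1) * (2 * Cρ) ^ (0 + i) * γ ^ (2 ^ (0 + i) - 2 ^ 0) := hB
        _ ≤ D * γ ^ n * K := by
            apply mul_le_mul_of_nonneg_left _ (by positivity)
            calc ∑ i ∈ Finset.range m, Cρ ^ (i + 1) * (2 * Cρ) ^ (0 + i) * γ ^ (2 ^ (0 + i) - 2 ^ 0)
                ≤ ∑ i ∈ Finset.range m, (2 * Cρ ^ 2) ^ (i + 1) * γ ^ (2 ^ i - 1) := by
                  apply Finset.sum_le_sum
                  intro i _
                  simp only [Nat.zero_add, pow_zero]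
                  apply mul_le_mul_of_nonneg_right _ (by positivity)
                  calc Cρ ^ (i+1) * (2*Cρ)^i = 2 ^ i * Cρ ^ (2*i+1) := by ring
                    _ ≤ 2 ^ (i+1) * Cρ ^ (2*i+2) := by
                        apply mul_le_mul _ (pow_le_pow_right₀ hCρ (by omega)) (by positivity) (by positivity)
                        exact pow_le_pow_right₀ (by norm_num) (by omega)
                    _ = (2 * Cρ ^ 2) ^ (i + 1) := by ring
              _ ≤ K := Summable.sum_le_tsum _ (fun i _ => by positivity) hsumm
    have cauchy : ∀ ε > 0, ∃ N : ℕ, ∀ m ≥ N, ∀ n ≥ N, Nd (xs m - xs n) < ε := by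
      intro ε hε
      have ht : Filter.Tendsto (fun n : ℕ => D * K * γ ^ n) Filter.atTop (nhds 0) := by
        simpa using (tendsto_pow_atTop_nhds_zero_of_lt_one hγ0 hγ1).const_mul (D * K)
      obtain ⟨N, hN⟩ := Filter.eventually_atTop.mp (ht.eventually_lt_const hε)
      refine ⟨N, fun m hm n hn => ?_⟩
      have main : ∀ a c : ℕ, N ≤ a → a ≤ c → Nd (xs c - xs a) < ε := by
        intro a c hNa hac
        calc Nd (xs c - xs a) ≤ Nρ (xs c - xs a) := hle _ _
          _ ≤ D * γ ^ a * K := bnd a c hac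
          _ ≤ D * γ ^ N * K := by
              apply mul_le_mul_of_nonneg_right _ hK0
              apply mul_le_mul_of_nonneg_left _ hD
              exact pow_le_pow_of_le_one hγ0 hγ1.le hNa
          _ = D * K * γ ^ N := by ring
          _ < ε := hN N le_rfl
      rcases le_total n m with h | h
      · exact main n m hn h
      · have hsym : Nd (xs m - xs n) = Nd (xs n - xs m) := by
          rw [← neg_sub (xs n) (xs m), hnegd]
        rw [hsym]
        exact main m n hm h
    obtain ⟨l, hl⟩ := hcomplete xs cauchy
    have hl' : ∀ ε > 0, ∃ N, ∀ n ≥ N, Nd (xs n - l) < ε :=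
      (tendstoZero (fun n => hnnd _)).mp hl
    -- T (xs n) in terms of the sequence
    have hTx : ∀ n, T (xs n) = (b+1) • xs (n+1) - b • xs n := by
      intro n
      have h := hxs n
      have hone : (b+1) * (1/(b+1)) = 1 := by field_simp
      calc T (xs n) = ((b+1) * (1/(b+1))) • T (xs n) := by rw [hone, one_smul]
        _ = (b+1) • ((1/(b+1)) • T (xs n)) := by rw [mul_smul]
        _ = (b+1) • (xs (n+1) - (1 - 1/(b+1)) • xs n) := by
            congr 1
            rw [h]
            abel
        _ = (b+1) • xs (n+1) - b • xs n := by
            rw [smul_sub, smul_smul]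
            have hsc : (b+1) * (1 - 1/(b+1)) = b := by field_simp; ring
            rw [hsc]
    have hTfix : T l = l := by
      have hTzero : ∀ ε > 0, Nd (T l - l) < ε := by
        intro ε hε
        set E := ε / (2 * Cd) with hEdef
        have hE : 0 < E := by positivity
        obtain ⟨δ, hδ0, hδ⟩ := hcont l E hE
        set η := min δ (E / (Cd * (2 * b + 2))) with hηdef
        have hη0 : 0 < η := lt_min hδ0 (by positivity)
        obtain ⟨N, hN⟩ := hl' η hη0
        have hx1 : Nd (xs N - l) < η := hN N le_rfl
        have hx2 : Nd (xs (N+1) - l) < η := hN (N+1) (by omega)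
        have hB : Nd (T (xs N) - l) < E := by
          have hrw2 : T (xs N) - l = (b+1) • (xs (N+1) - l) + -(b • (xs N - l)) := by
            rw [hTx N]
            module
          have htri := h2d ((b+1) • (xs (N+1) - l)) (-(b • (xs N - l)))
          rw [← hrw2, hnegd, h1d, h1d, abs_of_pos hb1, abs_of_nonneg hb] at htri
          have hηE : η ≤ E / (Cd * (2 * b + 2)) := min_le_right _ _
          have h1 : (b+1) * Nd (xs (N+1) - l) < (b+1) * η := mul_lt_mul_of_pos_left hx2 hb1
          have h2'' : b * Nd (xs N - l) ≤ b * η := mul_le_mul_of_nonneg_left hx1.le hb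
          have hstep : Cd * ((b+1) * Nd (xs (N+1) - l) + b * Nd (xs N - l))
              < Cd * ((2*b+2) * η) := by
            apply mul_lt_mul_of_pos_left _ hCd0
            nlinarith [hη0.le]
          have hfin : Cd * ((2*b+2) * η) ≤ E := by
            calc Cd * ((2*b+2) * η) = (Cd * (2*b+2)) * η := by ring
              _ ≤ (Cd * (2*b+2)) * (E / (Cd * (2*b+2))) :=
                  mul_le_mul_of_nonneg_left hηE (by positivity)
              _ = E := by field_simp
          linarith
        have hA : Nd (T (xs N) - T l) < E := hδ (xs N) (lt_of_lt_of_le hx1 (min_le_left _ _))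
        have hAA : Nd (T l - T (xs N)) < E := by
          have hsym : Nd (T l - T (xs N)) = Nd (T (xs N) - T l) := by
            rw [← neg_sub (T (xs N)) (T l), hnegd]
          rw [hsym]
          exact hA
        have htri2 := h2d (T l - T (xs N)) (T (xs N) - l)
        rw [sub_add_sub_cancel] at htri2
        calc Nd (T l - l) ≤ Cd * (Nd (T l - T (xs N)) + Nd (T (xs N) - l)) := htri2
          _ < Cd * (E + E) := by
              apply mul_lt_mul_of_pos_left _ hCd0
              linarith
          _ = ε := by
              rw [hEdef]
              field_simp
              ring
      have hle0 : Nd (T l - l) ≤ 0 := by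
        by_contra hpos
        push_neg at hpos
        exact absurd (hTzero _ hpos) (lt_irrefl _)
      have hzero : Nd (T l - l) = 0 := le_antisymm hle0 (hnnd _)
      exact sub_eq_zero.mp ((h0d _).mp hzero)
    exact ⟨l, hl, hTfix⟩
  -- uniqueness of fixed points
  have uniq : ∀ p q : X, T p = p → T q = q → p = q := by
    intro p q hp hq
    have h := hT p q
    rw [hp, hq] at h
    have hcomb : b • (p - q) + (p - q) = (b + 1) • (p - q) := by
      rw [add_smul, one_smul]
    rw [hcomb, h1ρ, abs_of_pos hb1] at h
    have hnn := hnnρ (p - q)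
    have hle0 : Nρ (p - q) ≤ 0 := by nlinarith
    have hzero : Nρ (p - q) = 0 := le_antisymm hle0 hnn
    exact sub_eq_zero.mp ((h0ρ _).mp hzero)
  obtain ⟨xstar, hxtend, hxfix⟩ :=
    conv (fun n => (fun x => (1 - 1/(b+1)) • x + (1/(b+1)) • T x)^[n] 0)
      (fun n => Function.iterate_succ_apply' _ n 0)
  refine ⟨xstar, hxfix, fun q hq => uniq q xstar hq hxfix, fun xs hxs => ?_⟩
  obtain ⟨l, hlt, hlf⟩ := conv xs hxs
  rwa [uniq l xstar hlf hxfix] at hlt
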